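/- Let A = σ u v* + E with σ > 0, ‖u‖₂ = ‖v‖₂ = 1, and let δ = ‖E‖_C (maximum absolute value of entries of E), ε = δ/(σ‖u‖_∞‖v‖_∞) ≤ 1/8, and μ₁ = (1 - sqrt(1-8ε))/2. Fix a column index j and set μ = |v_j|/‖v‖_∞. If a_{sj} is a maximal-in-modulus element of column j of A and μ₁ < μ < μ₂ = (1+sqrt(1-8ε))/2, then |u_s| > μ ‖u‖_∞. -/

import Mathlib

/-- If `A = σuv* + E`, `ε = ‖E‖_C/(σ‖u‖_∞‖v‖_∞) ≤ 1/8`, and `a_{sj}` is a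
maximal-in-modulus element of column `j` with `μ₁ < μ := |v_j|/‖v‖_∞ < μ₂`,
then `|u_s| > μ‖u‖_∞`. -/
theorem good_column_max_in_good_row {m n : ℕ} [NeZero m] [NeZero n]
    (σ : ℝ) (hσ : 0 < σ)
    (u : Fin m → ℂ) (v : Fin n → ℂ)
    (hu : ∑ i, ‖u i‖ ^ 2 = 1) (hv : ∑ j, ‖v j‖ ^ 2 = 1)
    (A E : Matrix (Fin m) (Fin n) ℂ)
    (hA : ∀ i j, A i j = σ * u i * (starRingEnd ℂ) (v j) + E i j)
    (δ : ℝ) (hδ : δ = ⨆ p : Fin m × Fin n, ‖E p.1 p.2‖)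
    (ε : ℝ)
    (hε : ε = δ / (σ * (⨆ i, ‖u i‖) * (⨆ j, ‖v j‖)))
    (hε8 : ε ≤ 1 / 8)
    (j : Fin n) (s : Fin m)
    (hmax : ∀ i, ‖A i j‖ ≤ ‖A s j‖)
    (μ : ℝ) (hμ : μ = ‖v j‖ / (⨆ j, ‖v j‖))
    (h1 : (1 - Real.sqrt (1 - 8 * ε)) / 2 < μ)
    (h2 : μ < (1 + Real.sqrt (1 - 8 * ε)) / 2) :
    μ * (⨆ i, ‖u i‖) < ‖u s‖ := by
  set U := ⨆ i, ‖u i‖ with hUdef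
  set V := ⨆ j, ‖v j‖ with hVdef
  have bddU : BddAbove (Set.range fun i => ‖u i‖) :=
    (Set.finite_range _).bddAbove
  have bddV : BddAbove (Set.range fun j => ‖v j‖) :=
    (Set.finite_range _).bddAbove
  have bddE : BddAbove (Set.range fun p : Fin m × Fin n => ‖E p.1 p.2‖) :=
    (Set.finite_range _).bddAbove
  have hUle : ∀ i, ‖u i‖ ≤ U := fun i => le_ciSup bddU i
  have hVle : ∀ j', ‖v j'‖ ≤ V := fun j' => le_ciSup bddV j'
  have hEle : ∀ i j', ‖E i j'‖ ≤ δ := by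
    intro i j'; rw [hδ]; exact le_ciSup bddE (i, j')
  have hδ0 : 0 ≤ δ := le_trans (norm_nonneg _) (hEle s j)
  have hU0 : 0 < U := by
    have hne : ∑ i, ‖u i‖ ^ 2 ≠ 0 := by rw [hu]; norm_num
    obtain ⟨i, _, hi⟩ := Finset.exists_ne_zero_of_sum_ne_zero hne
    have h1' : ‖u i‖ ≠ 0 := by
      intro h; rw [h] at hi; simp at hi
    have := (norm_nonneg (u i)).lt_of_ne (Ne.symm h1')
    exact lt_of_lt_of_le this (hUle i)
  have hV0 : 0 < V := by
    have hne : ∑ j', ‖v j'‖ ^ 2 ≠ 0 := by rw [hv]; norm_num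
    obtain ⟨j', _, hj⟩ := Finset.exists_ne_zero_of_sum_ne_zero hne
    have h1' : ‖v j'‖ ≠ 0 := by
      intro h; rw [h] at hj; simp at hj
    have := (norm_nonneg (v j')).lt_of_ne (Ne.symm h1')
    exact lt_of_lt_of_le this (hVle j')
  have hμV : ‖v j‖ = μ * V := by
    rw [hμ]; field_simp
  have hμ0 : 0 ≤ μ := by
    rw [hμ]; positivity
  -- δ in terms of ε
  have hδε : δ = ε * (σ * U * V) := by
    rw [hε]; field_simp
  -- the index attaining the sup of |u|
  obtain ⟨i0, hi0⟩ := Finite.exists_max (fun i => ‖u i‖)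
  have hUeq : ‖u i0‖ = U := le_antisymm (hUle i0) (ciSup_le hi0)
  have habs : ∀ i, ‖(σ : ℂ) * u i * (starRingEnd ℂ) (v j)‖
      = σ * ‖u i‖ * ‖v j‖ := by
    intro i
    rw [norm_mul, norm_mul, Complex.norm_conj, Complex.norm_real, Real.norm_eq_abs, abs_of_pos hσ]
  -- lower bound on |A i0 j|
  have hlow : σ * U * ‖v j‖ - δ ≤ ‖A i0 j‖ := by
    have key : ‖(σ : ℂ) * u i0 * (starRingEnd ℂ) (v j)‖
        ≤ ‖A i0 j‖ + ‖E i0 j‖ := by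
      have : (σ : ℂ) * u i0 * (starRingEnd ℂ) (v j) = A i0 j + (-(E i0 j)) := by
        rw [hA]; ring
      rw [this]
      exact le_trans (norm_add_le _ _) (by rw [norm_neg])
    rw [habs, hUeq] at key
    have := hEle i0 j
    linarith
  -- upper bound on |A s j|
  have hup : ‖A s j‖ ≤ σ * ‖u s‖ * ‖v j‖ + δ := by
    rw [hA]
    refine le_trans (norm_add_le _ _) ?_
    rw [habs]
    linarith [hEle s j]
  by_contra hcon
  push_neg at hcon
  -- hcon : |u s| ≤ μ * U
  have hchain : σ * U * ‖v j‖ - δ ≤ σ * ‖u s‖ * ‖v j‖ + δ :=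
    le_trans hlow (le_trans (hmax i0) hup)
  rw [hμV] at hchain
  have hus0 : 0 ≤ ‖u s‖ := norm_nonneg _
  have hkey : μ - μ ^ 2 ≤ 2 * ε := by
    have hσUV : 0 < σ * U * V := by positivity
    nlinarith [mul_le_mul_of_nonneg_right hcon (mul_nonneg (mul_nonneg hσ.le hμ0) hV0.le),
      hchain, hδε, hσUV]
  -- quadratic contradiction
  have hs : Real.sqrt (1 - 8 * ε) ^ 2 = 1 - 8 * ε :=
    Real.sq_sqrt (by linarith)
  nlinarith [mul_pos (sub_pos.2 h1) (sub_pos.2 h2), hs]
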